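/- For every x = (x₁, x₂) ∈ ℝ² with x ≠ 0, writing ρ = |x|, the componentwise Laplacian of u satisfies Δu(x) = (−α₂ + (α₁ − α₂(ρ − δ))/ρ − h(ρ − δ)/ρ²) · (x₂, −x₁)/ρ; that is, Δu is everywhere tangential to the concentric circles, with coefficient −α₂ + (α₁ − α₂(ρ − δ))/ρ − h(ρ − δ)/ρ². -/

import Mathlib

noncomputable section

/-- Poiseuille-type speed profile `h(r) = α₁ r − (α₂/2) r²`. -/
def prof (α₁ α₂ r : ℝ) : ℝ := α₁ * r - α₂ / 2 * r ^ 2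

/-- Euclidean norm on `ℝ × ℝ`. -/
def nrm (x : ℝ × ℝ) : ℝ := Real.sqrt (x.1 ^ 2 + x.2 ^ 2)

/-- Parallel laminar flow `u(x) = h(|x| − δ) (x₂, −x₁)/|x|` around the origin. -/
def vel (δ α₁ α₂ : ℝ) (x : ℝ × ℝ) : ℝ × ℝ :=
  (prof α₁ α₂ (nrm x - δ) / nrm x) • (x.2, -x.1)

/-- Componentwise Laplacian of a planar vector field. -/
def lap (f : ℝ × ℝ → ℝ × ℝ) (x : ℝ × ℝ) : ℝ × ℝ :=
  fderiv ℝ (fun y => fderiv ℝ f y (1, 0)) x (1, 0) +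
  fderiv ℝ (fun y => fderiv ℝ f y (0, 1)) x (0, 1)

/-- The componentwise Laplacian of the parallel laminar flow is everywhere tangential
to the concentric circles, with coefficient
`−α₂ + (α₁ − α₂(ρ − δ))/ρ − h(ρ − δ)/ρ²` where `ρ = |x|`. -/
def pr (y : ℝ × ℝ) : ℝ × ℝ →L[ℝ] ℝ :=
  y.1 • ContinuousLinearMap.fst ℝ ℝ ℝ + y.2 • ContinuousLinearMap.snd ℝ ℝ ℝ

@[simp] lemma pr_apply (y v : ℝ × ℝ) : pr y v = y.1 * v.1 + y.2 * v.2 := by simp [pr]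

lemma nrm_pos {y : ℝ × ℝ} (hy : y ≠ 0) : 0 < nrm y := by
  have : y.1 ^ 2 + y.2 ^ 2 ≠ 0 := by
    intro h
    apply hy
    have h1 : y.1 = 0 := by nlinarith [sq_nonneg y.1, sq_nonneg y.2]
    have h2 : y.2 = 0 := by nlinarith [sq_nonneg y.1, sq_nonneg y.2]
    exact Prod.ext h1 h2
  exact Real.sqrt_pos.mpr (lt_of_le_of_ne (by positivity) (Ne.symm this))

lemma nrm_sq (y : ℝ × ℝ) : nrm y ^ 2 = y.1 ^ 2 + y.2 ^ 2 := Real.sq_sqrt (by positivity)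

lemma hasFDerivAt_nrm {y : ℝ × ℝ} (hy : y ≠ 0) :
    HasFDerivAt nrm ((nrm y)⁻¹ • pr y) y := by
  have hr := (nrm_pos hy).ne'
  have hs : y.1 ^ 2 + y.2 ^ 2 ≠ 0 := by
    intro h; rw [nrm, h, Real.sqrt_zero] at hr; exact hr rfl
  have hsq : HasFDerivAt (fun z : ℝ × ℝ => z.1 ^ 2 + z.2 ^ 2)
      (((2 * y.1 ^ 1) • (ContinuousLinearMap.fst ℝ ℝ ℝ)) + ((2 * y.2 ^ 1) • (ContinuousLinearMap.snd ℝ ℝ ℝ))) y :=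
    (((hasDerivAt_pow 2 y.1).comp_hasFDerivAt y (hasFDerivAt_fst (p := y)))).add
      (((hasDerivAt_pow 2 y.2).comp_hasFDerivAt y (hasFDerivAt_snd (p := y))))
  refine ((Real.hasDerivAt_sqrt hs).comp_hasFDerivAt y hsq).congr_fderiv ?_
  refine ContinuousLinearMap.ext fun v => ?_
  have h2 : Real.sqrt (y.1 ^ 2 + y.2 ^ 2) = nrm y := rfl
  simp [pr, h2]
  field_simp

def cf (δ α₁ α₂ : ℝ) (y : ℝ × ℝ) : ℝ := prof α₁ α₂ (nrm y - δ) / nrm y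
def Mf (δ α₁ α₂ : ℝ) (y : ℝ × ℝ) : ℝ :=
  (α₁ - α₂ * (nrm y - δ)) * nrm y - prof α₁ α₂ (nrm y - δ)
def Kf (δ α₁ α₂ : ℝ) (y : ℝ × ℝ) : ℝ := Mf δ α₁ α₂ y / nrm y ^ 3
def kf (δ α₁ α₂ : ℝ) (y : ℝ × ℝ) : ℝ :=
  (-α₂ * nrm y ^ 2 - 3 * Mf δ α₁ α₂ y) / nrm y ^ 5

lemma hasDerivAt_prof (α₁ α₂ t : ℝ) : HasDerivAt (prof α₁ α₂) (α₁ - α₂ * t) t := by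
  have h := (((hasDerivAt_id t).const_mul α₁).sub ((hasDerivAt_pow 2 t).const_mul (α₂ / 2)))
  have he : α₁ - α₂ * t = α₁ * 1 - α₂ / 2 * (↑2 * t ^ 1) := by push_cast; ring
  rw [he]
  exact h

lemma hasFDerivAt_cf {δ α₁ α₂ : ℝ} {y : ℝ × ℝ} (hy : y ≠ 0) :
    HasFDerivAt (cf δ α₁ α₂) ((Kf δ α₁ α₂ y) • pr y) y := by
  have hr := (nrm_pos hy).ne'
  have hN := (hasDerivAt_prof α₁ α₂ (nrm y - δ)).comp_hasFDerivAt y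
    ((hasFDerivAt_nrm hy).sub_const δ)
  have hinv := (hasDerivAt_inv hr).comp_hasFDerivAt y (hasFDerivAt_nrm hy)
  have h := (hN.mul hinv).congr_fderiv (g' := (Kf δ α₁ α₂ y) • pr y) (by
    refine ContinuousLinearMap.ext fun v => ?_
    simp [Kf, Mf]
    field_simp
    ring)
  exact h.congr_of_eventuallyEq (Filter.Eventually.of_forall fun z => by
    simp [cf, div_eq_mul_inv, Function.comp])

lemma hasFDerivAt_Mf {δ α₁ α₂ : ℝ} {y : ℝ × ℝ} (hy : y ≠ 0) :
    HasFDerivAt (Mf δ α₁ α₂) ((-α₂) • pr y) y := by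
  have hr := (nrm_pos hy).ne'
  have hnrm := hasFDerivAt_nrm hy
  have hlin : HasFDerivAt (fun z => α₁ - α₂ * (nrm z - δ))
      (-(α₂ • ((nrm y)⁻¹ • pr y))) y := ((hnrm.sub_const δ).const_mul α₂).const_sub α₁
  have hN := (hasDerivAt_prof α₁ α₂ (nrm y - δ)).comp_hasFDerivAt y (hnrm.sub_const δ)
  have h := ((hlin.mul hnrm).sub hN).congr_fderiv (g' := (-α₂ : ℝ) • pr y) (by
    refine ContinuousLinearMap.ext fun v => ?_
    simp
    field_simp)
  exact h.congr_of_eventuallyEq (Filter.Eventually.of_forall fun z => by simp [Mf])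

lemma hasFDerivAt_Kf {δ α₁ α₂ : ℝ} {y : ℝ × ℝ} (hy : y ≠ 0) :
    HasFDerivAt (Kf δ α₁ α₂) ((kf δ α₁ α₂ y) • pr y) y := by
  have hr := (nrm_pos hy).ne'
  have hr3 : nrm y ^ 3 ≠ 0 := pow_ne_zero 3 hr
  have hpow : HasFDerivAt (fun z => nrm z ^ 3)
      ((3 * nrm y ^ 2) • ((nrm y)⁻¹ • pr y)) y := by
    have := (hasDerivAt_pow 3 (nrm y)).comp_hasFDerivAt y (hasFDerivAt_nrm hy)
    simpa [Function.comp_def] using this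
  have hinv := (hasDerivAt_inv hr3).comp_hasFDerivAt y hpow
  have h := ((hasFDerivAt_Mf (δ := δ) (α₁ := α₁) (α₂ := α₂) hy).mul hinv).congr_fderiv (g' := (kf δ α₁ α₂ y) • pr y) (by
    refine ContinuousLinearMap.ext fun v => ?_
    simp [kf, Kf]
    field_simp
    ring)
  exact h.congr_of_eventuallyEq (Filter.Eventually.of_forall fun z => by
    simp [Kf, div_eq_mul_inv, Function.comp])

def Dv (δ α₁ α₂ : ℝ) (y : ℝ × ℝ) : ℝ × ℝ →L[ℝ] ℝ × ℝ :=
  ((y.2 * Kf δ α₁ α₂ y) • pr y + cf δ α₁ α₂ y • ContinuousLinearMap.snd ℝ ℝ ℝ).prod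
    ((-(y.1 * Kf δ α₁ α₂ y)) • pr y - cf δ α₁ α₂ y • ContinuousLinearMap.fst ℝ ℝ ℝ)

lemma hasFDerivAt_vel {δ α₁ α₂ : ℝ} {y : ℝ × ℝ} (hy : y ≠ 0) :
    HasFDerivAt (vel δ α₁ α₂) (Dv δ α₁ α₂ y) y := by
  have hc := hasFDerivAt_cf (δ := δ) (α₁ := α₁) (α₂ := α₂) hy
  have h1 := hc.mul (hasFDerivAt_snd (p := y))
  have h2 := hc.mul ((hasFDerivAt_fst (p := y)).neg)
  have h := (h1.prodMk h2).congr_fderiv (g' := Dv δ α₁ α₂ y) (by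
    refine ContinuousLinearMap.ext fun v => ?_
    refine Prod.ext ?_ ?_ <;> · simp [Dv]; ring)
  exact h.congr_of_eventuallyEq (Filter.Eventually.of_forall fun z => by
    simp [vel, cf, Prod.smul_mk, smul_eq_mul])

def P1 (δ α₁ α₂ : ℝ) (y : ℝ × ℝ) : ℝ × ℝ :=
  (Kf δ α₁ α₂ y * y.1 * y.2, -(Kf δ α₁ α₂ y * y.1 ^ 2) - cf δ α₁ α₂ y)
def P2 (δ α₁ α₂ : ℝ) (y : ℝ × ℝ) : ℝ × ℝ :=
  (Kf δ α₁ α₂ y * y.2 ^ 2 + cf δ α₁ α₂ y, -(Kf δ α₁ α₂ y * y.1 * y.2))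

lemma fderiv_vel_e1 {δ α₁ α₂ : ℝ} {y : ℝ × ℝ} (hy : y ≠ 0) :
    fderiv ℝ (vel δ α₁ α₂) y (1, 0) = P1 δ α₁ α₂ y := by
  rw [(hasFDerivAt_vel hy).fderiv]
  refine Prod.ext ?_ ?_ <;> · simp [Dv, P1]; ring

lemma fderiv_vel_e2 {δ α₁ α₂ : ℝ} {y : ℝ × ℝ} (hy : y ≠ 0) :
    fderiv ℝ (vel δ α₁ α₂) y (0, 1) = P2 δ α₁ α₂ y := by
  rw [(hasFDerivAt_vel hy).fderiv]
  refine Prod.ext ?_ ?_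
  · simp [Dv, P2]; ring
  · simp [Dv, P2]; left; ring

theorem laplacian_of_parallel_laminar_flow
    (δ α₁ α₂ : ℝ) (hδ : 0 < δ) (hα₁ : 0 < α₁) (hα₂ : 0 < α₂)
    (x : ℝ × ℝ) (hx : x ≠ 0) :
    lap (vel δ α₁ α₂) x
      = (-α₂ + (α₁ - α₂ * (nrm x - δ)) / nrm x - prof α₁ α₂ (nrm x - δ) / nrm x ^ 2) •
          ((nrm x)⁻¹ • ((x.2, -x.1) : ℝ × ℝ)) := by
  have hr := (nrm_pos hx).ne'
  have hmem : ({0}ᶜ : Set (ℝ × ℝ)) ∈ nhds x := isOpen_compl_singleton.mem_nhds hx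
  have hev1 : (fun y => fderiv ℝ (vel δ α₁ α₂) y (1, 0)) =ᶠ[nhds x] P1 δ α₁ α₂ := by
    filter_upwards [hmem] with y hy
    exact fderiv_vel_e1 hy
  have hev2 : (fun y => fderiv ℝ (vel δ α₁ α₂) y (0, 1)) =ᶠ[nhds x] P2 δ α₁ α₂ := by
    filter_upwards [hmem] with y hy
    exact fderiv_vel_e2 hy
  rw [lap, hev1.fderiv_eq, hev2.fderiv_eq]
  have hK := hasFDerivAt_Kf (δ := δ) (α₁ := α₁) (α₂ := α₂) hx
  have hc := hasFDerivAt_cf (δ := δ) (α₁ := α₁) (α₂ := α₂) hx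
  have hfst : HasFDerivAt (fun z : ℝ × ℝ => z.1) (ContinuousLinearMap.fst ℝ ℝ ℝ) x := hasFDerivAt_fst
  have hsnd : HasFDerivAt (fun z : ℝ × ℝ => z.2) (ContinuousLinearMap.snd ℝ ℝ ℝ) x := hasFDerivAt_snd
  have hx1sq : HasFDerivAt (fun z : ℝ × ℝ => z.1 ^ 2)
      ((2 * x.1 ^ 1) • ContinuousLinearMap.fst ℝ ℝ ℝ) x :=
    (hasDerivAt_pow 2 x.1).comp_hasFDerivAt x hfst
  have hx2sq : HasFDerivAt (fun z : ℝ × ℝ => z.2 ^ 2)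
      ((2 * x.2 ^ 1) • ContinuousLinearMap.snd ℝ ℝ ℝ) x :=
    (hasDerivAt_pow 2 x.2).comp_hasFDerivAt x hsnd
  have hP1 := ((hK.mul hfst).mul hsnd).prodMk (((hK.mul hx1sq).neg).sub hc)
  have hP2 := ((hK.mul hx2sq).add hc).prodMk (((hK.mul hfst).mul hsnd).neg)
  have hP1' : HasFDerivAt (P1 δ α₁ α₂) _ x := hP1
  have hP2' : HasFDerivAt (P2 δ α₁ α₂) _ x := hP2
  rw [hP1'.fderiv, hP2'.fderiv]
  have key : kf δ α₁ α₂ x * nrm x ^ 2 + 4 * Kf δ α₁ α₂ x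
      = (-α₂ + (α₁ - α₂ * (nrm x - δ)) / nrm x - prof α₁ α₂ (nrm x - δ) / nrm x ^ 2) * (nrm x)⁻¹ := by
    simp only [kf, Kf, Mf]
    field_simp
    ring
  have hs := nrm_sq x
  refine Prod.ext ?_ ?_
  · simp [Prod.smul_mk, smul_eq_mul]
    linear_combination (-(kf δ α₁ α₂ x * x.2)) * hs + x.2 * key
  · simp [Prod.smul_mk, smul_eq_mul]
    linear_combination (kf δ α₁ α₂ x * x.1) * hs - x.1 * key
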